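/- arXiv:2103.06085 — 2 statements merged into one kernel-verified Lean document; each statement's English description precedes it below -/
import Mathlib

section
/- For a nonempty closed convex set O ⊆ ℝ² and a point x̄, the signed distance from x̄ to O equals the supremum over unit vectors ẑ of the signed distance from x̄ to the supporting hyperplane in direction ẑ: sd(x̄, O) = sup_{‖ẑ‖=1} (⟨ẑ, x̄⟩ − h_O(ẑ)). -/
open scoped RealInnerProductSpace
open Classical

noncomputable def suppFunE (S : Set (EuclideanSpace ℝ (Fin 2)))
    (z : EuclideanSpace ℝ (Fin 2)) : EReal :=
  ⨆ y : S, ((⟪z, (y : EuclideanSpace ℝ (Fin 2))⟫ : ℝ) : EReal)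

/-- Penetration depth of a point: infimum of `‖z‖` over translations `z` with `x̄ + z ∉ O`
(`+∞` if no such translation exists). -/
noncomputable def penPointE (xbar : EuclideanSpace ℝ (Fin 2))
    (O : Set (EuclideanSpace ℝ (Fin 2))) : EReal :=
  sInf {r : EReal | ∃ z : EuclideanSpace ℝ (Fin 2), r = (‖z‖ : EReal) ∧ xbar + z ∉ O}

/-- Signed distance of a point to a set. -/
noncomputable def sdPointE (xbar : EuclideanSpace ℝ (Fin 2))
    (O : Set (EuclideanSpace ℝ (Fin 2))) : EReal :=
  if xbar ∈ O then -penPointE xbar O else ((Metric.infDist xbar O : ℝ) : EReal)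

private lemma ereal_le_coe_of_forall_add (c : ℝ) (a : EReal)
    (h : ∀ ε : ℝ, 0 < ε → a ≤ ((c + ε : ℝ) : EReal)) : a ≤ (c : EReal) := by
  by_contra hc
  push_neg at hc
  obtain ⟨b, hb1, hb2⟩ := EReal.exists_between_coe_real hc
  have hb1' : c < b := by exact_mod_cast hb1
  have := h (b - c) (sub_pos.mpr hb1')
  rw [show c + (b - c) = b by ring] at this
  exact lt_irrefl _ (this.trans_lt hb2)

private lemma ereal_coe_le_of_forall_sub (c : ℝ) (a : EReal)
    (h : ∀ ε : ℝ, 0 < ε → ((c - ε : ℝ) : EReal) ≤ a) : (c : EReal) ≤ a := by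
  by_contra hc
  push_neg at hc
  obtain ⟨b, hb1, hb2⟩ := EReal.exists_between_coe_real hc
  have hb2' : b < c := by exact_mod_cast hb2
  have := h (c - b) (sub_pos.mpr hb2')
  rw [show c - (c - b) = b by ring] at this
  exact lt_irrefl _ (hb1.trans_le this)

private lemma ereal_eq_top_of_forall (a : EReal) (h : ∀ r : ℝ, (r : EReal) ≤ a) : a = ⊤ := by
  by_contra h'
  obtain ⟨b, hb1, _⟩ := EReal.exists_between_coe_real (lt_top_iff_ne_top.mpr h')
  exact lt_irrefl _ (hb1.trans_le (h b))

private lemma sep_lemma (O : Set (EuclideanSpace ℝ (Fin 2)))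
    (hne : O.Nonempty) (hcl : IsClosed O) (hconv : Convex ℝ O)
    (w : EuclideanSpace ℝ (Fin 2)) (hw : w ∉ O) :
    ∃ z p : EuclideanSpace ℝ (Fin 2), ‖z‖ = 1 ∧ p ∈ O ∧
      suppFunE O z = ((⟪z, p⟫ : ℝ) : EReal) ∧
      ⟪z, w - p⟫ = Metric.infDist w O := by
  obtain ⟨p, hp, hproj⟩ := exists_norm_eq_iInf_of_complete_convex hne hcl.isComplete hconv w
  have hvar : ∀ y ∈ O, ⟪w - p, y - p⟫ ≤ 0 :=
    (norm_eq_iInf_iff_real_inner_le_zero hconv hp).mp hproj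
  have hwp : w - p ≠ 0 := sub_ne_zero.mpr fun h => hw (h ▸ hp)
  have hnorm : (0 : ℝ) < ‖w - p‖ := norm_pos_iff.mpr hwp
  refine ⟨‖w - p‖⁻¹ • (w - p), p, ?_, hp, ?_, ?_⟩
  · rw [norm_smul, norm_inv, norm_norm, inv_mul_cancel₀ hnorm.ne']
  · have hle : ∀ y ∈ O, ⟪‖w - p‖⁻¹ • (w - p), y⟫ ≤ ⟪‖w - p‖⁻¹ • (w - p), p⟫ := by
      intro y hy
      have h1 : ⟪‖w - p‖⁻¹ • (w - p), y - p⟫ ≤ 0 := by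
        rw [real_inner_smul_left]
        exact mul_nonpos_of_nonneg_of_nonpos (inv_nonneg.mpr hnorm.le) (hvar y hy)
      rw [inner_sub_right] at h1
      linarith
    apply le_antisymm
    · exact iSup_le fun y => EReal.coe_le_coe_iff.mpr (hle y y.2)
    · exact le_iSup (fun y : O =>
        ((⟪‖w - p‖⁻¹ • (w - p), (y : EuclideanSpace ℝ (Fin 2))⟫ : ℝ) : EReal)) ⟨p, hp⟩
  · have hinf : Metric.infDist w O = ‖w - p‖ := by
      rw [Metric.infDist_eq_iInf]
      simp_rw [dist_eq_norm]
      exact hproj.symm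
    rw [hinf, real_inner_smul_left, real_inner_self_eq_norm_sq, sq]
    field_simp

private lemma pen_eq (O : Set (EuclideanSpace ℝ (Fin 2))) (xbar : EuclideanSpace ℝ (Fin 2))
    (hc : Oᶜ.Nonempty) : penPointE xbar O = ((Metric.infDist xbar Oᶜ : ℝ) : EReal) := by
  apply le_antisymm
  · apply ereal_le_coe_of_forall_add
    intro ε hε
    obtain ⟨y, hy, hlt⟩ := (Metric.infDist_lt_iff hc).mp
      (lt_add_of_pos_right (Metric.infDist xbar Oᶜ) hε)
    have hmem : ((‖y - xbar‖ : ℝ) : EReal) ∈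
        {r : EReal | ∃ z : EuclideanSpace ℝ (Fin 2), r = (‖z‖ : EReal) ∧ xbar + z ∉ O} :=
      ⟨y - xbar, rfl, by simpa using hy⟩
    refine le_trans (sInf_le hmem) ?_
    rw [EReal.coe_le_coe_iff, ← dist_eq_norm']
    exact hlt.le
  · apply le_sInf
    rintro r ⟨z, rfl, hz⟩
    rw [EReal.coe_le_coe_iff]
    have := Metric.infDist_le_dist_of_mem (x := xbar) (Set.mem_compl hz)
    simpa [dist_eq_norm] using this

/-- for nonempty closed convex `O`,
`sd(x̄, O) = sup_{‖ẑ‖=1} (⟪ẑ, x̄⟫ − h_O(ẑ))`. -/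
theorem sdPoint_eq_sup_over_unit_directions
    (O : Set (EuclideanSpace ℝ (Fin 2)))
    (hne : O.Nonempty) (hcl : IsClosed O) (hconv : Convex ℝ O)
    (xbar : EuclideanSpace ℝ (Fin 2)) :
    sdPointE xbar O =
      ⨆ zhat ∈ {z : EuclideanSpace ℝ (Fin 2) | ‖z‖ = 1},
        (((⟪zhat, xbar⟫ : ℝ) : EReal) - suppFunE O zhat) := by
  by_cases hx : xbar ∈ O
  · rw [sdPointE, if_pos hx]
    by_cases hcomp : Oᶜ.Nonempty
    · set d := Metric.infDist xbar Oᶜ with hd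
      rw [pen_eq O xbar hcomp, ← EReal.coe_neg]
      apply le_antisymm
      · -- sup ≤ coe (-d) : wrong direction? goal is coe(-d) ≤ ... first
        apply ereal_coe_le_of_forall_sub
        intro ε hε
        obtain ⟨w, hw, hlt⟩ := (Metric.infDist_lt_iff hcomp).mp (lt_add_of_pos_right d hε)
        obtain ⟨z, p, hz1, hp, hsupp, hzw⟩ := sep_lemma O hne hcl hconv w hw
        have hterm : ((-d - ε : ℝ) : EReal) ≤ ((⟪z, xbar⟫ : ℝ) : EReal) - suppFunE O z := by
          rw [hsupp, ← EReal.coe_sub, EReal.coe_le_coe_iff]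
          have h1 : ⟪z, xbar⟫ - ⟪z, p⟫ = ⟪z, xbar - w⟫ + ⟪z, w - p⟫ := by
            rw [inner_sub_right, inner_sub_right]; ring
          have h2 : |⟪z, xbar - w⟫| ≤ ‖xbar - w‖ := by
            calc |⟪z, xbar - w⟫| ≤ ‖z‖ * ‖xbar - w‖ := abs_real_inner_le_norm z _
            _ = ‖xbar - w‖ := by rw [hz1, one_mul]
          have h3 : ‖xbar - w‖ < d + ε := by rw [← dist_eq_norm]; exact hlt
          have h4 : (0 : ℝ) ≤ ⟪z, w - p⟫ := hzw ▸ Metric.infDist_nonneg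
          rw [h1]
          have := neg_abs_le ⟪z, xbar - w⟫
          linarith
        exact le_trans hterm (le_iSup₂_of_le z hz1 le_rfl)
      · apply iSup₂_le
        intro z hz
        have hz1 : ‖z‖ = 1 := hz
        by_cases hT : suppFunE O z = ⊤
        · rw [hT]; simp
        · have hB : suppFunE O z ≠ ⊥ := by
            obtain ⟨y₀, hy₀⟩ := hne
            exact ne_bot_of_le_ne_bot (EReal.coe_ne_bot _)
              (le_iSup (fun y : O =>
                ((⟪z, (y : EuclideanSpace ℝ (Fin 2))⟫ : ℝ) : EReal)) ⟨y₀, hy₀⟩)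
          set s := (suppFunE O z).toReal with hs
          have hcoe : suppFunE O z = (s : EReal) := (EReal.coe_toReal hT hB).symm
          have hub : ∀ y ∈ O, ⟪z, y⟫ ≤ s := by
            intro y hy
            have h1 : ((⟪z, y⟫ : ℝ) : EReal) ≤ suppFunE O z :=
              le_iSup (fun y : O =>
                ((⟪z, (y : EuclideanSpace ℝ (Fin 2))⟫ : ℝ) : EReal)) ⟨y, hy⟩
            rw [hcoe] at h1
            exact_mod_cast h1
          rw [hcoe, ← EReal.coe_sub, EReal.coe_le_coe_iff]
          have key : d ≤ s - ⟪z, xbar⟫ := by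
            apply le_of_forall_pos_le_add
            intro ε hε
            set t := s - ⟪z, xbar⟫ + ε with ht
            have hsx : ⟪z, xbar⟫ ≤ s := hub xbar hx
            have ht0 : 0 < t := by rw [ht]; linarith
            have hzz : ⟪z, z⟫ = 1 := by
              rw [real_inner_self_eq_norm_sq, hz1]; norm_num
            have hout : xbar + t • z ∉ O := by
              intro hmem
              have h2 := hub _ hmem
              rw [inner_add_right, real_inner_smul_right, hzz] at h2
              rw [ht] at h2
              linarith
            have hdd : d ≤ dist xbar (xbar + t • z) :=
              Metric.infDist_le_dist_of_mem hout
            have hdist : dist xbar (xbar + t • z) = t := by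
              rw [dist_eq_norm, show xbar - (xbar + t • z) = -(t • z) by abel,
                norm_neg, norm_smul, hz1, mul_one, Real.norm_eq_abs, abs_of_pos ht0]
            rw [hdist] at hdd
            rw [ht] at hdd
            linarith
          linarith
    · have huniv : O = Set.univ := by
        rwa [Set.not_nonempty_iff_eq_empty, Set.compl_empty_iff] at hcomp
      have hpen : penPointE xbar O = ⊤ := by
        rw [penPointE, show {r : EReal | ∃ z : EuclideanSpace ℝ (Fin 2),
            r = (‖z‖ : EReal) ∧ xbar + z ∉ O} = (∅ : Set EReal) by
          ext r; simp [huniv]]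
        exact sInf_empty
      rw [hpen]
      symm
      rw [show -(⊤ : EReal) = ⊥ from rfl, ← le_bot_iff]
      apply iSup₂_le
      intro z hz
      have hz1 : ‖z‖ = 1 := hz
      have hzz : ⟪z, z⟫ = 1 := by
        rw [real_inner_self_eq_norm_sq, hz1]; norm_num
      have hT : suppFunE O z = ⊤ := by
        apply ereal_eq_top_of_forall
        intro r
        have h1 : ((⟪z, (r • z : EuclideanSpace ℝ (Fin 2))⟫ : ℝ) : EReal) ≤ suppFunE O z :=
          le_iSup (fun y : O =>
            ((⟪z, (y : EuclideanSpace ℝ (Fin 2))⟫ : ℝ) : EReal))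
            ⟨r • z, by rw [huniv]; trivial⟩
        rwa [real_inner_smul_right, hzz, mul_one] at h1
      rw [hT]
      simp
  · rw [sdPointE, if_neg hx]
    apply le_antisymm
    · obtain ⟨z, p, hz1, hp, hsupp, hzw⟩ := sep_lemma O hne hcl hconv xbar hx
      refine le_iSup₂_of_le z hz1 ?_
      rw [hsupp, ← EReal.coe_sub, EReal.coe_le_coe_iff, ← hzw, inner_sub_right]
    · apply iSup₂_le
      intro z hz
      have hz1 : ‖z‖ = 1 := hz
      by_cases hT : suppFunE O z = ⊤
      · rw [hT]; simp
      · have hB : suppFunE O z ≠ ⊥ := by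
          obtain ⟨y₀, hy₀⟩ := hne
          exact ne_bot_of_le_ne_bot (EReal.coe_ne_bot _)
            (le_iSup (fun y : O =>
              ((⟪z, (y : EuclideanSpace ℝ (Fin 2))⟫ : ℝ) : EReal)) ⟨y₀, hy₀⟩)
        set s := (suppFunE O z).toReal with hs
        have hcoe : suppFunE O z = (s : EReal) := (EReal.coe_toReal hT hB).symm
        have hub : ∀ y ∈ O, ⟪z, y⟫ ≤ s := by
          intro y hy
          have h1 : ((⟪z, y⟫ : ℝ) : EReal) ≤ suppFunE O z :=
            le_iSup (fun y : O =>
              ((⟪z, (y : EuclideanSpace ℝ (Fin 2))⟫ : ℝ) : EReal)) ⟨y, hy⟩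
          rw [hcoe] at h1
          exact_mod_cast h1
        rw [hcoe, ← EReal.coe_sub, EReal.coe_le_coe_iff]
        by_contra hcon
        push_neg at hcon
        obtain ⟨y, hy, hdy⟩ := (Metric.infDist_lt_iff hne).mp hcon
        have h1 : ⟪z, y⟫ ≤ s := hub y hy
        have h2 : ⟪z, xbar - y⟫ ≤ ‖xbar - y‖ := by
          calc ⟪z, xbar - y⟫ ≤ ‖z‖ * ‖xbar - y‖ := real_inner_le_norm z _
          _ = ‖xbar - y‖ := by rw [hz1, one_mul]
        rw [inner_sub_right] at h2
        rw [dist_eq_norm] at hdy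
        linarith
end

section
/- For two nonempty compact convex sets V, O ⊆ ℝ², sd(V, O) = sup_{‖ẑ‖=1} inf_{x ∈ O, y ∈ V} ⟨ẑ, y − x⟩, i.e., the signed distance between the sets is the supremum over unit directions of the infimum of ⟨ẑ, y − x⟩ over pairs (x, y) ∈ O × V. -/
open scoped RealInnerProductSpace Pointwise

noncomputable def distSet (V O : Set (EuclideanSpace ℝ (Fin 2))) : ℝ :=
  sInf {r : ℝ | ∃ z : EuclideanSpace ℝ (Fin 2), r = ‖z‖ ∧
    (((fun v => v + z) '' V) ∩ O).Nonempty}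

noncomputable def penSet (V O : Set (EuclideanSpace ℝ (Fin 2))) : ℝ :=
  sInf {r : ℝ | ∃ z : EuclideanSpace ℝ (Fin 2), r = ‖z‖ ∧
    ¬(((fun v => v + z) '' V) ∩ O).Nonempty}

noncomputable def sd (V O : Set (EuclideanSpace ℝ (Fin 2))) : ℝ :=
  distSet V O - penSet V O

section Aux

local notation "E2" => EuclideanSpace ℝ (Fin 2)

variable {V O : Set (EuclideanSpace ℝ (Fin 2))}

/-- The Minkowski-type difference set `O - V`. -/
private def KK (V O : Set (EuclideanSpace ℝ (Fin 2))) : Set (EuclideanSpace ℝ (Fin 2)) :=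
  {w | ∃ x ∈ O, ∃ y ∈ V, w = x - y}

private lemma nonempty_iff_memK (z : E2) :
    (((fun v => v + z) '' V) ∩ O).Nonempty ↔ z ∈ KK V O := by
  constructor
  · rintro ⟨a, ⟨y, hy, rfl⟩, ha⟩
    exact ⟨y + z, ha, y, hy, by abel⟩
  · rintro ⟨x, hx, y, hy, rfl⟩
    exact ⟨y + (x - y), ⟨y, hy, rfl⟩, by rwa [show y + (x - y) = x by abel]⟩

private lemma distSet_eq : distSet V O = sInf (norm '' KK V O) := by
  unfold distSet
  congr 1
  ext r
  constructor
  · rintro ⟨z, rfl, hz⟩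
    exact ⟨z, (nonempty_iff_memK z).1 hz, rfl⟩
  · rintro ⟨z, hz, rfl⟩
    exact ⟨z, rfl, (nonempty_iff_memK z).2 hz⟩

private lemma penSet_eq : penSet V O = sInf (norm '' (KK V O)ᶜ) := by
  unfold penSet
  congr 1
  ext r
  constructor
  · rintro ⟨z, rfl, hz⟩
    exact ⟨z, fun h => hz ((nonempty_iff_memK z).2 h), rfl⟩
  · rintro ⟨z, hz, rfl⟩
    exact ⟨z, rfl, fun h => hz ((nonempty_iff_memK z).1 h)⟩

private lemma innerSet_eq (u : E2) :
    {s : ℝ | ∃ x ∈ O, ∃ y ∈ V, s = ⟪u, y - x⟫} = -((fun w => ⟪u, w⟫) '' KK V O) := by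
  ext s
  simp only [Set.mem_neg, Set.mem_image, Set.mem_setOf_eq]
  constructor
  · rintro ⟨x, hx, y, hy, rfl⟩
    exact ⟨x - y, ⟨x, hx, y, hy, rfl⟩, by rw [← inner_neg_right, neg_sub]⟩
  · rintro ⟨w, ⟨x, hx, y, hy, rfl⟩, hs⟩
    refine ⟨x, hx, y, hy, ?_⟩
    have h1 : (⟪u, y - x⟫ : ℝ) = -⟪u, x - y⟫ := by rw [← inner_neg_right, neg_sub]
    rw [h1, hs, neg_neg]

/-- for nonempty compact convex `V, O ⊆ ℝ²`,
`sd(V, O) = sup_{‖ẑ‖=1} inf_{x ∈ O, y ∈ V} ⟪ẑ, y − x⟫`. -/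
theorem sd_eq_sup_inf (V O : Set (EuclideanSpace ℝ (Fin 2)))
    (hVne : V.Nonempty) (hVc : IsCompact V) (hVconv : Convex ℝ V)
    (hOne : O.Nonempty) (hOc : IsCompact O) (hOconv : Convex ℝ O) :
    sd V O = sSup {r : ℝ | ∃ zhat : EuclideanSpace ℝ (Fin 2), ‖zhat‖ = 1 ∧
      r = sInf {s : ℝ | ∃ x ∈ O, ∃ y ∈ V, s = ⟪zhat, y - x⟫}} := by
  classical
  -- basic facts about K
  have hKc : IsCompact (KK V O) := by
    have hset : KK V O = (fun p : E2 × E2 => p.1 - p.2) '' (O ×ˢ V) := by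
      ext z
      constructor
      · rintro ⟨x, hx, y, hy, rfl⟩
        exact ⟨(x, y), ⟨hx, hy⟩, rfl⟩
      · rintro ⟨⟨x, y⟩, ⟨hx, hy⟩, rfl⟩
        exact ⟨x, hx, y, hy, rfl⟩
    rw [hset]
    exact (hOc.prod hVc).image (continuous_fst.sub continuous_snd)
  have hKconv : Convex ℝ (KK V O) := by
    have hset2 : KK V O = O - V := by
      ext z
      simp only [Set.mem_sub, KK, Set.mem_setOf_eq]
      constructor
      · rintro ⟨x, hx, y, hy, rfl⟩
        exact ⟨x, hx, y, hy, rfl⟩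
      · rintro ⟨x, hx, y, hy, rfl⟩
        exact ⟨x, hx, y, hy, rfl⟩
    rw [hset2]
    exact hOconv.sub hVconv
  obtain ⟨x₀, hx₀⟩ := hOne
  obtain ⟨y₀, hy₀⟩ := hVne
  have hKne : (KK V O).Nonempty := ⟨x₀ - y₀, x₀, hx₀, y₀, hy₀, rfl⟩
  have hKcl : IsClosed (KK V O) := hKc.isClosed
  have hcompl : ((KK V O)ᶜ).Nonempty := by
    obtain ⟨R, hR⟩ := hKc.isBounded.subset_closedBall 0
    refine ⟨EuclideanSpace.single (0 : Fin 2) (|R| + 1), fun hz => ?_⟩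
    have h1 := hR hz
    rw [Metric.mem_closedBall, dist_zero_right, EuclideanSpace.norm_single,
      Real.norm_eq_abs, abs_of_nonneg (by positivity)] at h1
    linarith [le_abs_self R]
  have hnormK_nonneg : ∀ r ∈ norm '' KK V O, (0:ℝ) ≤ r := by
    rintro r ⟨z, _, rfl⟩; exact norm_nonneg z
  have hnormKC_nonneg : ∀ r ∈ norm '' (KK V O)ᶜ, (0:ℝ) ≤ r := by
    rintro r ⟨z, _, rfl⟩; exact norm_nonneg z
  have hnormKne : (norm '' KK V O).Nonempty := hKne.image _
  have hnormKCne : (norm '' (KK V O)ᶜ).Nonempty := hcompl.image _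
  -- support function
  set A : E2 → Set ℝ := fun u => (fun w => ⟪u, w⟫) '' KK V O with hA
  have hAc : ∀ u, IsCompact (A u) := fun u => hKc.image (continuous_const.inner continuous_id)
  have hAne : ∀ u, (A u).Nonempty := fun u => hKne.image _
  have hAbdd : ∀ u, BddAbove (A u) := fun u => (hAc u).bddAbove
  set h : E2 → ℝ := fun u => sSup (A u) with hh
  have hle : ∀ u : E2, ∀ w ∈ KK V O, ⟪u, w⟫ ≤ h u := fun u w hw =>
    le_csSup (hAbdd u) ⟨w, hw, rfl⟩
  have hg : ∀ u : E2,
      sInf {s : ℝ | ∃ x ∈ O, ∃ y ∈ V, s = ⟪u, y - x⟫} = -h u := by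
    intro u
    rw [innerSet_eq, Real.sInf_def, neg_neg]
  set S : Set ℝ := {r : ℝ | ∃ zhat : EuclideanSpace ℝ (Fin 2), ‖zhat‖ = 1 ∧
      r = sInf {s : ℝ | ∃ x ∈ O, ∃ y ∈ V, s = ⟪zhat, y - x⟫}} with hSdef
  have hmemS : ∀ u : E2, ‖u‖ = 1 → -h u ∈ S := fun u hu => ⟨u, hu, (hg u).symm⟩
  have hSelt : ∀ r ∈ S, ∃ u : E2, ‖u‖ = 1 ∧ r = -h u := by
    rintro r ⟨u, hu, rfl⟩
    exact ⟨u, hu, hg u⟩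
  rw [show sd V O = distSet V O - penSet V O from rfl, distSet_eq, penSet_eq]
  by_cases h0 : (0 : E2) ∈ KK V O
  · -- overlapping case : dist = 0
    have hd0 : sInf (norm '' KK V O) = 0 :=
      le_antisymm (csInf_le ⟨0, hnormK_nonneg⟩ ⟨0, h0, norm_zero⟩)
        (le_csInf hnormKne hnormK_nonneg)
    set p := sInf (norm '' (KK V O)ᶜ) with hp
    have hph : ∀ u : E2, ‖u‖ = 1 → p ≤ h u := by
      intro u hu
      have hu2 : (⟪u, u⟫ : ℝ) = 1 := by
        rw [real_inner_self_eq_norm_sq, hu]; norm_num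
      have hhu0 : 0 ≤ h u := by
        have h1 := hle u 0 h0
        rwa [inner_zero_right] at h1
      refine le_of_forall_pos_le_add fun ε hε => ?_
      have hz : (h u + ε) • u ∉ KK V O := by
        intro hzK
        have h2 := hle u _ hzK
        rw [real_inner_smul_right, hu2, mul_one] at h2
        linarith
      have h3 : p ≤ ‖(h u + ε) • u‖ := csInf_le ⟨0, hnormKC_nonneg⟩ ⟨_, hz, rfl⟩
      rwa [norm_smul, hu, mul_one, Real.norm_eq_abs, abs_of_nonneg (by linarith)] at h3
    have hub : ∀ r ∈ S, r ≤ -p := by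
      intro r hr
      obtain ⟨u, hu, rfl⟩ := hSelt r hr
      exact neg_le_neg (hph u hu)
    have hu₀ : ‖(EuclideanSpace.single (0 : Fin 2) (1:ℝ))‖ = 1 := by
      rw [EuclideanSpace.norm_single]; exact norm_one
    have hSne : S.Nonempty := ⟨_, hmemS _ hu₀⟩
    have hlow : -p ≤ sSup S := by
      refine le_of_forall_pos_le_add fun ε hε => ?_
      have hlt : sInf (norm '' (KK V O)ᶜ) < p + ε := by rw [← hp]; linarith
      obtain ⟨r, ⟨z, hzK, rfl⟩, hr⟩ := exists_lt_of_csInf_lt hnormKCne hlt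
      obtain ⟨f, c, hfc, hcz⟩ := geometric_hahn_banach_closed_point hKconv hKcl hzK
      set v := (InnerProductSpace.toDual ℝ (EuclideanSpace ℝ (Fin 2))).symm f with hv
      have hvx : ∀ x : E2, ⟪v, x⟫ = f x := fun x => InnerProductSpace.toDual_symm_apply
      have hvne : v ≠ 0 := by
        intro hv0
        have h1 : f 0 < c := hfc 0 h0
        have h3 : f 0 = 0 := by rw [← hvx, hv0, inner_zero_left]
        have h4 : f z = 0 := by rw [← hvx, hv0, inner_zero_left]
        rw [h3] at h1
        rw [h4] at hcz
        linarith
      have hvnorm : 0 < ‖v‖ := norm_pos_iff.2 hvne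
      set u := ‖v‖⁻¹ • v with hu
      have hu1 : ‖u‖ = 1 := by
        rw [hu, norm_smul, norm_inv, norm_norm, inv_mul_cancel₀ (ne_of_gt hvnorm)]
      have hhu : h u ≤ ‖z‖ := by
        refine csSup_le (hAne u) ?_
        rintro s ⟨w, hw, rfl⟩
        have h5 : (⟪u, w⟫ : ℝ) = ‖v‖⁻¹ * f w := by rw [hu, real_inner_smul_left, hvx]
        have h6 : (⟪u, z⟫ : ℝ) = ‖v‖⁻¹ * f z := by rw [hu, real_inner_smul_left, hvx]
        have h7 : (⟪u, w⟫ : ℝ) ≤ ⟪u, z⟫ := by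
          rw [h5, h6]
          exact mul_le_mul_of_nonneg_left (le_of_lt (lt_trans (hfc w hw) hcz))
            (inv_nonneg.2 (norm_nonneg v))
        calc (⟪u, w⟫ : ℝ) ≤ ⟪u, z⟫ := h7
          _ ≤ ‖u‖ * ‖z‖ := real_inner_le_norm u z
          _ = ‖z‖ := by rw [hu1, one_mul]
      have h8 : sSup S ≥ -h u := le_csSup ⟨-p, hub⟩ (hmemS u hu1)
      linarith
    have hfin : sSup S = -p := le_antisymm (csSup_le hSne hub) hlow
    rw [hd0, hfin]
    ring
  · -- disjoint case : pen = 0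
    have hpen0 : sInf (norm '' (KK V O)ᶜ) = 0 :=
      le_antisymm (csInf_le ⟨0, hnormKC_nonneg⟩ ⟨0, h0, norm_zero⟩)
        (le_csInf hnormKCne hnormKC_nonneg)
    obtain ⟨w₀, hw₀K, hw₀min⟩ := hKc.exists_isMinOn hKne continuous_norm.continuousOn
    have hmin' : ∀ w ∈ KK V O, ‖w₀‖ ≤ ‖w‖ := fun w hw => (isMinOn_iff.mp hw₀min) w hw
    set d := ‖w₀‖ with hd
    have hdpos : 0 < d := by
      rcases (norm_nonneg w₀).lt_or_eq with h1 | h1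
      · exact h1
      · exfalso; apply h0
        have : w₀ = 0 := norm_eq_zero.1 h1.symm
        rwa [this] at hw₀K
    have hdist : sInf (norm '' KK V O) = d :=
      le_antisymm (csInf_le ⟨0, hnormK_nonneg⟩ ⟨w₀, hw₀K, rfl⟩)
        (le_csInf hnormKne (by rintro r ⟨w, hw, rfl⟩; exact hmin' w hw))
    have hproj : ∀ w ∈ KK V O, d ^ 2 ≤ ⟪w₀, w⟫ := by
      intro w hw
      by_contra hlt
      push_neg at hlt
      have ha : (⟪w₀, w - w₀⟫ : ℝ) < 0 := by
        rw [inner_sub_right, real_inner_self_eq_norm_sq, ← hd]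
        linarith
      rcases eq_or_ne w w₀ with rfl | hne
      · rw [sub_self, inner_zero_right] at ha; exact lt_irrefl 0 ha
      · have hbpos : 0 < ‖w - w₀‖ ^ 2 := by
          have : w - w₀ ≠ 0 := sub_ne_zero.2 hne
          exact pow_pos (norm_pos_iff.2 this) 2
        set t := min 1 (-(⟪w₀, w - w₀⟫ : ℝ) / ‖w - w₀‖ ^ 2) with ht
        have ht0 : 0 < t := lt_min one_pos (div_pos (neg_pos.2 ha) hbpos)
        have ht1 : t ≤ 1 := min_le_left _ _
        have hcm : w₀ + t • (w - w₀) ∈ KK V O := by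
          have hmem := hKconv hw₀K hw (by linarith : (0:ℝ) ≤ 1 - t) ht0.le (by ring)
          have heq : w₀ + t • (w - w₀) = (1 - t) • w₀ + t • w := by module
          rwa [heq]
        have hnorm2 : ‖w₀‖ ≤ ‖w₀ + t • (w - w₀)‖ := hmin' _ hcm
        have hsq : ‖w₀ + t • (w - w₀)‖ ^ 2
            = ‖w₀‖ ^ 2 + 2 * (t * ⟪w₀, w - w₀⟫) + t ^ 2 * ‖w - w₀‖ ^ 2 := by
          rw [norm_add_sq_real, real_inner_smul_right, norm_smul, mul_pow,
            Real.norm_eq_abs, sq_abs]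
        have h2 : ‖w₀‖ ^ 2 ≤ ‖w₀ + t • (w - w₀)‖ ^ 2 :=
          pow_le_pow_left₀ (norm_nonneg _) hnorm2 2
        have htb : t * ‖w - w₀‖ ^ 2 ≤ -(⟪w₀, w - w₀⟫ : ℝ) := by
          have hmr := min_le_right 1 (-(⟪w₀, w - w₀⟫ : ℝ) / ‖w - w₀‖ ^ 2)
          calc t * ‖w - w₀‖ ^ 2
              ≤ (-(⟪w₀, w - w₀⟫ : ℝ) / ‖w - w₀‖ ^ 2) * ‖w - w₀‖ ^ 2 :=
                mul_le_mul_of_nonneg_right hmr hbpos.le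
            _ = -(⟪w₀, w - w₀⟫ : ℝ) := div_mul_cancel₀ _ (ne_of_gt hbpos)
        have h3 : t * (t * ‖w - w₀‖ ^ 2) ≤ t * (-(⟪w₀, w - w₀⟫ : ℝ)) :=
          mul_le_mul_of_nonneg_left htb ht0.le
        have h4 : t * (⟪w₀, w - w₀⟫ : ℝ) < 0 := mul_neg_of_pos_of_neg ht0 ha
        nlinarith [hsq, h2, h3, h4]
    have hub : ∀ r ∈ S, r ≤ d := by
      intro r hr
      obtain ⟨u, hu, rfl⟩ := hSelt r hr
      have h5 := hle u w₀ hw₀K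
      have h6 : -(‖u‖ * ‖w₀‖) ≤ (⟪u, w₀⟫ : ℝ) := (abs_le.1 (abs_real_inner_le_norm u w₀)).1
      rw [hu, one_mul] at h6
      have : -d ≤ h u := by rw [hd]; linarith
      linarith
    set u₁ := d⁻¹ • (-w₀) with hu₁def
    have hu₁ : ‖u₁‖ = 1 := by
      rw [hu₁def, norm_smul, norm_neg, norm_inv, Real.norm_eq_abs, abs_of_pos hdpos, ← hd,
        inv_mul_cancel₀ hdpos.ne']
    have hhu₁ : h u₁ ≤ -d := by
      refine csSup_le (hAne u₁) ?_
      rintro s ⟨w, hw, rfl⟩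
      show (⟪u₁, w⟫ : ℝ) ≤ -d
      have h7 : (⟪u₁, w⟫ : ℝ) = d⁻¹ * -(⟪w₀, w⟫ : ℝ) := by
        rw [hu₁def, real_inner_smul_left, inner_neg_left]
      have h8 : d⁻¹ * -(⟪w₀, w⟫ : ℝ) ≤ d⁻¹ * -(d ^ 2) :=
        mul_le_mul_of_nonneg_left (neg_le_neg (hproj w hw)) (inv_nonneg.2 hdpos.le)
      have h9 : d⁻¹ * -(d ^ 2) = -d := by
        rw [mul_neg, sq, ← mul_assoc, inv_mul_cancel₀ hdpos.ne', one_mul]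
      rw [h7]
      linarith
    have hSne : S.Nonempty := ⟨_, hmemS u₁ hu₁⟩
    have hlow : d ≤ sSup S := by
      have h10 := le_csSup ⟨d, hub⟩ (hmemS u₁ hu₁)
      linarith
    have hhigh : sSup S ≤ d := csSup_le hSne hub
    rw [hdist, hpen0]
    linarith

end Aux
end
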